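/- Let n ≥ 1 and let v ∈ ℝⁿ be a unit vector. If z is drawn uniformly at random from {−1, 1}ⁿ, then the probability that ⟨z, v⟩² ≥ 1/n is at least 1/2. -/

import Mathlib

open Matrix Polynomial Set

/-- Euclidean norm of a vector in `ℝⁿ`. -/
noncomputable def vecNorm {n : ℕ} (v : Fin n → ℝ) : ℝ :=
  Real.sqrt (∑ i, v i ^ 2)

/-- Spectral (operator) norm of a real matrix. -/
noncomputable def matNorm {m n : ℕ} (A : Matrix (Fin m) (Fin n) ℝ) : ℝ :=
  sSup {c : ℝ | ∃ v : Fin n → ℝ, vecNorm v ≤ 1 ∧ c = vecNorm (A.mulVec v)}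

/-- Largest eigenvalue of a square real matrix. -/
noncomputable def lmax {n : ℕ} (A : Matrix (Fin n) (Fin n) ℝ) : ℝ :=
  sSup {μ : ℝ | ∃ v : Fin n → ℝ, v ≠ 0 ∧ A.mulVec v = μ • v}

/-- Smallest eigenvalue of a square real matrix. -/
noncomputable def lmin {n : ℕ} (A : Matrix (Fin n) (Fin n) ℝ) : ℝ :=
  sInf {μ : ℝ | ∃ v : Fin n → ℝ, v ≠ 0 ∧ A.mulVec v = μ • v}

/-- A matrix is tridiagonal if `T i j = 0` whenever `|i - j| > 1`. -/
def IsTridiagonal {k : ℕ} (T : Matrix (Fin k) (Fin k) ℝ) : Prop :=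
  ∀ i j : Fin k, 1 < |(i : ℤ) - (j : ℤ)| → T i j = 0

/-- The matrix function `f(A)` of a real symmetric matrix, defined through the
eigendecomposition `A = V Λ Vᵀ` as `V f(Λ) Vᵀ`. -/
noncomputable def matFun {n : ℕ} {A : Matrix (Fin n) (Fin n) ℝ} (hA : A.IsHermitian)
    (f : ℝ → ℝ) : Matrix (Fin n) (Fin n) ℝ :=
  (hA.eigenvectorUnitary : Matrix (Fin n) (Fin n) ℝ) * Matrix.diagonal (f ∘ hA.eigenvalues) *
    star (hA.eigenvectorUnitary : Matrix (Fin n) (Fin n) ℝ)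

/-- The `i`-th Chebyshev polynomial of the first kind, shifted and stretched to the range
`[lmin A - η, lmax A + η]`: with `r_max = lmax A + η`, `r_min = lmin A - η` and
`δ = 2 / (r_max - r_min)`, this is `y ↦ T_i (δ (y - r_min) - 1)`. -/
noncomputable def shiftedCheb {n : ℕ} (A : Matrix (Fin n) (Fin n) ℝ) (η : ℝ) (i : ℕ) :
    Polynomial ℝ :=
  (Polynomial.Chebyshev.T ℝ i).comp
    (Polynomial.C (2 / ((lmax A + η) - (lmin A - η))) *
      (Polynomial.X - Polynomial.C (lmin A - η)) - 1)

open scoped Classical in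
/-- For a unit vector `v ∈ ℝⁿ` and a uniformly random sign vector `z`, the
probability that `⟨z, v⟩² ≥ 1/n` is at least `1/2`. -/
theorem random_sign_inner_product
    {n : ℕ} (hn : 1 ≤ n) (v : Fin n → ℝ) (hv : vecNorm v = 1) :
    (1 : ℝ) / 2 ≤
      ((Finset.univ.filter fun z : Fin n → Bool =>
          (1 : ℝ) / n ≤ (∑ i, (if z i then (1 : ℝ) else -1) * v i) ^ 2).card : ℝ) / 2 ^ n := by
  have hsum : (∑ i, v i ^ 2) = 1 := by
    have h0 : 0 ≤ ∑ i, v i ^ 2 := Finset.sum_nonneg fun i _ => sq_nonneg _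
    have := hv
    unfold vecNorm at this
    nlinarith [Real.sq_sqrt h0, Real.sqrt_nonneg (∑ i, v i ^ 2)]
  -- find j with v j ^ 2 ≥ 1/n
  have hne : (Finset.univ : Finset (Fin n)).Nonempty := by
    simpa [Finset.univ_nonempty_iff] using (Fin.pos_iff_nonempty.mp hn)
  obtain ⟨j, hj⟩ : ∃ j : Fin n, (1 : ℝ) / n ≤ v j ^ 2 := by
    by_contra h
    push_neg at h
    have : (∑ i, v i ^ 2) < ∑ _i : Fin n, (1 : ℝ) / n :=
      Finset.sum_lt_sum_of_nonempty hne fun i _ => h i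
    have hn' : (0 : ℝ) < n := by exact_mod_cast hn
    rw [Finset.sum_const, Finset.card_univ, Fintype.card_fin, nsmul_eq_mul,
      mul_one_div, div_self (ne_of_gt hn')] at this
    linarith [hsum ▸ this]
  set P : (Fin n → Bool) → Prop :=
    fun z => (1 : ℝ) / n ≤ (∑ i, (if z i then (1 : ℝ) else -1) * v i) ^ 2 with hP
  set σ : (Fin n → Bool) → (Fin n → Bool) := fun z => Function.update z j (!z j) with hσ
  have hinv : Function.Involutive σ := by
    intro z
    funext i
    by_cases hij : i = j <;> simp [hσ, Function.update, hij]
  have hS : ∀ z, (∑ i, (if σ z i then (1 : ℝ) else -1) * v i)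
      = (∑ i, (if z i then (1 : ℝ) else -1) * v i)
        - 2 * (if z j then (1:ℝ) else -1) * v j := by
    intro z
    rw [← Finset.add_sum_erase _ _ (Finset.mem_univ j),
        ← Finset.add_sum_erase _ _ (Finset.mem_univ j)]
    have h1 : ∀ i ∈ Finset.univ.erase j,
        (if σ z i then (1:ℝ) else -1) * v i = (if z i then (1:ℝ) else -1) * v i := by
      intro i hi
      have : i ≠ j := Finset.ne_of_mem_erase hi
      simp [hσ, Function.update, this]
    rw [Finset.sum_congr rfl h1]
    have : σ z j = !z j := by simp [hσ]
    rw [this]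
    cases z j <;> simp <;> ring
  have hmap : ∀ z, ¬ P z → P (σ z) := by
    intro z hz
    simp only [hP] at hz ⊢
    push_neg at hz
    rw [hS]
    set a := ∑ i, (if z i then (1 : ℝ) else -1) * v i
    have hε : (if z j then (1:ℝ) else -1) ^ 2 = 1 := by cases z j <;> norm_num
    nlinarith [sq_nonneg (a - (if z j then (1:ℝ) else -1) * v j), hj, hz]
  have hcard : (Finset.univ.filter fun z => ¬ P z).card ≤
      (Finset.univ.filter P).card := by
    apply Finset.card_le_card_of_injOn σ
    · intro z hz
      simp only [Finset.mem_coe, Finset.mem_filter, Finset.mem_univ, true_and] at hz ⊢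
      exact hmap z hz
    · exact fun a _ b _ h => hinv.injective h
  have htot : (Finset.univ.filter P).card + (Finset.univ.filter fun z => ¬ P z).card
      = 2 ^ n := by
    rw [Finset.card_filter_add_card_filter_not, Finset.card_univ]
    simp [Fintype.card_fun]
  have h2 : (2:ℕ) ^ n ≤ 2 * (Finset.univ.filter P).card := by omega
  have hpos : (0:ℝ) < 2 ^ n := by positivity
  rw [div_le_div_iff₀ (by norm_num) hpos]
  have : ((2:ℕ) ^ n : ℝ) ≤ 2 * ((Finset.univ.filter P).card : ℝ) := by exact_mod_cast h2
  push_cast at this ⊢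
  linarith
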